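/- Let n₁, n₂, r ≥ 1 and n₃ ≥ 1, and let A : Fin n₁ → Fin n₂ → ZMod n₃ → ℂ. Then the following are equivalent: (1) there exist X : Fin n₁ → Fin r → ZMod n₃ → ℂ and Y : Fin r → Fin n₂ → ZMod n₃ → ℂ with A = X * Y; (2) for every k ∈ ZMod n₃, the n₁ × n₂ complex matrix (i, j) ↦ Â i j k has rank at most r. In other words, a tensor admits a t-product factorization with inner tubal dimension r if and only if every Fourier-domain frontal slice has rank at most r. -/

import Mathlib

open Finset Matrix

/-- Mode-3 discrete Fourier transform of a third-order tensor. -/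
noncomputable def dft3 {n₁ n₂ n₃ : ℕ} [NeZero n₃]
    (A : Fin n₁ → Fin n₂ → ZMod n₃ → ℂ) : Fin n₁ → Fin n₂ → ZMod n₃ → ℂ :=
  fun i j k => ∑ m : ZMod n₃,
    A i j m * Complex.exp (-(2 * (Real.pi : ℂ) * Complex.I *
      ((k.val : ℂ) * (m.val : ℂ))) / (n₃ : ℂ))

/-- The t-product: matrix multiplication combined with circular convolution
along the third mode. -/
noncomputable def tProd3 {n₁ r n₂ n₃ : ℕ} [NeZero n₃]
    (X : Fin n₁ → Fin r → ZMod n₃ → ℂ) (Y : Fin r → Fin n₂ → ZMod n₃ → ℂ) :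
    Fin n₁ → Fin n₂ → ZMod n₃ → ℂ :=
  fun i j k => ∑ l : Fin r, ∑ m : ZMod n₃, X i l m * Y l j (k - m)

set_option linter.unusedSectionVars false

namespace TprodAux

variable {n : ℕ} [NeZero n]

/-- The basic root of unity used in the DFT. -/
noncomputable def zeta (n : ℕ) : ℂ := Complex.exp (-(2 * (Real.pi : ℂ) * Complex.I) / n)

lemma zeta_pow_n : zeta n ^ n = 1 := by
  have hn : (n : ℂ) ≠ 0 := Nat.cast_ne_zero.mpr (NeZero.ne n)
  rw [zeta, ← Complex.exp_nat_mul]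
  rw [mul_div_assoc', mul_comm, mul_div_assoc, div_self hn, mul_one]
  rw [Complex.exp_neg, Complex.exp_two_pi_mul_I, inv_one]

lemma zeta_mul_conj : zeta n * Complex.exp (2 * (Real.pi : ℂ) * Complex.I / n) = 1 := by
  rw [zeta, ← Complex.exp_add, neg_div, neg_add_cancel, Complex.exp_zero]

lemma zeta_pow_eq_one_iff {j : ℕ} : zeta n ^ j = 1 ↔ n ∣ j := by
  have hprim := Complex.isPrimitiveRoot_exp n (NeZero.ne n)
  have hinv : Complex.exp (2 * (Real.pi : ℂ) * Complex.I / n) * zeta n = 1 := by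
    rw [mul_comm]; exact zeta_mul_conj
  have hprod : Complex.exp (2 * (Real.pi : ℂ) * Complex.I / n) ^ j * zeta n ^ j = 1 := by
    rw [← mul_pow, hinv, one_pow]
  constructor
  · intro h
    rw [h, mul_one] at hprod
    exact hprim.dvd_of_pow_eq_one j hprod
  · rintro ⟨i, rfl⟩
    rw [pow_mul, zeta_pow_n, one_pow]

lemma zeta_pow_mod (x : ℕ) : zeta n ^ x = zeta n ^ (x % n) := by
  conv_lhs => rw [← Nat.div_add_mod x n]
  rw [pow_add, pow_mul, zeta_pow_n, one_pow, one_mul]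

/-- Additive character. -/
noncomputable def E (a : ZMod n) : ℂ := zeta n ^ a.val

lemma E_zero : E (0 : ZMod n) = 1 := by simp [E]

lemma E_add (a b : ZMod n) : E (a + b) = E a * E b := by
  rw [E, E, E, ← pow_add, ZMod.val_add, ← zeta_pow_mod]

lemma exp_eq_E (k m : ZMod n) :
    Complex.exp (-(2 * (Real.pi : ℂ) * Complex.I *
      ((k.val : ℂ) * (m.val : ℂ))) / (n : ℂ)) = E (k * m) := by
  rw [E, ZMod.val_mul, ← zeta_pow_mod, zeta, ← Complex.exp_nat_mul]
  push_cast
  ring_nf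

lemma sum_val (f : ℕ → ℂ) : ∑ m : ZMod n, f m.val = ∑ i ∈ range n, f i := by
  apply Finset.sum_nbij' (fun m => ZMod.val m) (fun i => ((i : ZMod n)))
  · intro m _; exact Finset.mem_range.mpr (ZMod.val_lt m)
  · intro i _; exact Finset.mem_univ _
  · intro m _; exact ZMod.natCast_rightInverse m
  · intro i hi; exact ZMod.val_cast_of_lt (Finset.mem_range.mp hi)
  · intro m _; rfl

/-- Orthogonality. -/
lemma sum_E_mul (a : ZMod n) : ∑ m : ZMod n, E (a * m) = if a = 0 then (n : ℂ) else 0 := by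
  have key : ∀ m : ZMod n, E (a * m) = (zeta n ^ a.val) ^ m.val := by
    intro m
    rw [E, ZMod.val_mul, ← zeta_pow_mod, pow_mul]
  simp only [key]
  rw [sum_val (f := fun i => (zeta n ^ a.val) ^ i)]
  by_cases ha : a = 0
  · simp [ha, ZMod.val_zero]
  · rw [if_neg ha]
    have hval : a.val ≠ 0 := fun h => ha (by
      have := ZMod.natCast_rightInverse (n := n) a
      rw [← this, h, Nat.cast_zero])
    have hne : zeta n ^ a.val ≠ 1 := by
      rw [Ne, zeta_pow_eq_one_iff]
      exact fun hdvd => hval (Nat.eq_zero_of_dvd_of_lt hdvd (ZMod.val_lt a))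
    rw [geom_sum_eq hne]
    have : (zeta n ^ a.val) ^ n = 1 := by
      rw [← pow_mul, mul_comm, pow_mul, zeta_pow_n, one_pow]
    rw [this, sub_self, zero_div]

end TprodAux

namespace Part2

open TprodAux

variable {n : ℕ} [NeZero n]

lemma dft3_eq {n₁ n₂ : ℕ} (A : Fin n₁ → Fin n₂ → ZMod n → ℂ) (i : Fin n₁) (j : Fin n₂)
    (k : ZMod n) : dft3 A i j k = ∑ m : ZMod n, A i j m * E (k * m) := by
  simp only [dft3, exp_eq_E]

lemma inv_dft (f : ZMod n → ℂ) (s : ZMod n) :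
    (n : ℂ)⁻¹ * ∑ k : ZMod n, (∑ m : ZMod n, f m * E (k * m)) * E (-(k * s)) = f s := by
  have step : ∀ k : ZMod n, (∑ m : ZMod n, f m * E (k * m)) * E (-(k * s))
      = ∑ m : ZMod n, f m * E ((m - s) * k) := by
    intro k
    rw [Finset.sum_mul]
    refine Finset.sum_congr rfl fun m _ => ?_
    rw [mul_assoc, ← E_add]
    congr 1
    ring
  simp only [step]
  rw [Finset.sum_comm]
  simp only [← Finset.mul_sum, sum_E_mul]
  have step2 : ∀ m : ZMod n, f m * (if m - s = 0 then (n : ℂ) else 0)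
      = if m = s then f m * n else 0 := by
    intro m
    by_cases hm : m = s
    · simp [hm]
    · rw [if_neg (sub_ne_zero.mpr hm), if_neg hm, mul_zero]
  simp only [step2, Finset.sum_ite_eq' Finset.univ, Finset.mem_univ, if_true]
  have hn : (n : ℂ) ≠ 0 := Nat.cast_ne_zero.mpr (NeZero.ne n)
  field_simp

lemma dft_inv (g : ZMod n → ℂ) (k₀ : ZMod n) :
    ∑ m : ZMod n, ((n : ℂ)⁻¹ * ∑ k : ZMod n, g k * E (-(k * m))) * E (k₀ * m) = g k₀ := by
  have step : ∀ m : ZMod n, ((n : ℂ)⁻¹ * ∑ k : ZMod n, g k * E (-(k * m))) * E (k₀ * m)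
      = (n : ℂ)⁻¹ * ∑ k : ZMod n, g k * E ((k₀ - k) * m) := by
    intro m
    rw [mul_assoc, Finset.sum_mul]
    congr 1
    refine Finset.sum_congr rfl fun k _ => ?_
    rw [mul_assoc, ← E_add]
    congr 1
    ring
  simp only [step, ← Finset.mul_sum]
  rw [Finset.sum_comm]
  simp only [← Finset.mul_sum, sum_E_mul]
  have step2 : ∀ k : ZMod n, g k * (if k₀ - k = 0 then (n : ℂ) else 0)
      = if k = k₀ then g k * n else 0 := by
    intro k
    by_cases hk : k = k₀
    · simp [hk]
    · rw [if_neg (sub_ne_zero.mpr (Ne.symm hk)), if_neg hk, mul_zero]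
  simp only [step2, Finset.sum_ite_eq' Finset.univ, Finset.mem_univ, if_true]
  have hn : (n : ℂ) ≠ 0 := Nat.cast_ne_zero.mpr (NeZero.ne n)
  field_simp

lemma conv_dft (x y : ZMod n → ℂ) (k : ZMod n) :
    ∑ s : ZMod n, (∑ m : ZMod n, x m * y (s - m)) * E (k * s)
      = (∑ m : ZMod n, x m * E (k * m)) * (∑ m : ZMod n, y m * E (k * m)) := by
  have step : ∀ s m : ZMod n, x m * y (s - m) * E (k * s)
      = (x m * E (k * m)) * (y (s - m) * E (k * (s - m))) := by
    intro s m
    have h : E (k * s) = E (k * m) * E (k * (s - m)) := by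
      rw [← E_add]; congr 1; ring
    rw [h]; ring
  calc ∑ s : ZMod n, (∑ m : ZMod n, x m * y (s - m)) * E (k * s)
      = ∑ s : ZMod n, ∑ m : ZMod n,
          (x m * E (k * m)) * (y (s - m) * E (k * (s - m))) := by
        simp only [Finset.sum_mul]
        exact Finset.sum_congr rfl fun s _ => Finset.sum_congr rfl fun m _ => step s m
    _ = ∑ m : ZMod n, ∑ s : ZMod n,
          (x m * E (k * m)) * (y (s - m) * E (k * (s - m))) := Finset.sum_comm
    _ = ∑ m : ZMod n, (x m * E (k * m)) * ∑ s : ZMod n, (y (s - m) * E (k * (s - m))) := by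
        simp only [← Finset.mul_sum]
    _ = ∑ m : ZMod n, (x m * E (k * m)) * ∑ t : ZMod n, (y t * E (k * t)) := by
        refine Finset.sum_congr rfl fun m _ => ?_
        congr 1
        exact Fintype.sum_equiv (Equiv.subRight m) _ _ fun s => rfl
    _ = (∑ m : ZMod n, x m * E (k * m)) * (∑ m : ZMod n, y m * E (k * m)) :=
        (Finset.sum_mul _ _ _).symm

lemma dft3_tProd3 {n₁ n₂ r : ℕ} (X : Fin n₁ → Fin r → ZMod n → ℂ)
    (Y : Fin r → Fin n₂ → ZMod n → ℂ) (i : Fin n₁) (j : Fin n₂) (k : ZMod n) :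
    dft3 (tProd3 X Y) i j k = ∑ l : Fin r, dft3 X i l k * dft3 Y l j k := by
  simp only [dft3_eq, tProd3]
  calc ∑ s : ZMod n, (∑ l : Fin r, ∑ m : ZMod n, X i l m * Y l j (s - m)) * E (k * s)
      = ∑ l : Fin r, ∑ s : ZMod n, (∑ m : ZMod n, X i l m * Y l j (s - m)) * E (k * s) := by
        simp only [Finset.sum_mul]; exact Finset.sum_comm
    _ = ∑ l : Fin r, (∑ m : ZMod n, X i l m * E (k * m)) * (∑ m : ZMod n, Y l j m * E (k * m)) :=
        Finset.sum_congr rfl fun l _ => conv_dft _ _ k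

lemma exists_factor {n₁ n₂ r : ℕ} (B : Matrix (Fin n₁) (Fin n₂) ℂ) (h : B.rank ≤ r) :
    ∃ (P : Matrix (Fin n₁) (Fin r) ℂ) (Q : Matrix (Fin r) (Fin n₂) ℂ), B = P * Q := by
  set W := LinearMap.range B.mulVecLin with hW
  set d := Module.finrank ℂ W with hd
  have hdr : d ≤ r := h
  let b : Module.Basis (Fin d) ℂ W := Module.finBasis ℂ W
  let Qlin : (Fin n₂ → ℂ) →ₗ[ℂ] (Fin d → ℂ) := b.equivFun.toLinearMap ∘ₗ B.mulVecLin.rangeRestrict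
  let Plin : (Fin d → ℂ) →ₗ[ℂ] (Fin n₁ → ℂ) := W.subtype ∘ₗ b.equivFun.symm.toLinearMap
  have hcomp : Plin ∘ₗ Qlin = B.mulVecLin := by
    apply LinearMap.ext
    intro v
    show W.subtype (b.equivFun.symm (b.equivFun (B.mulVecLin.rangeRestrict v))) = B.mulVecLin v
    rw [LinearEquiv.symm_apply_apply]
    rfl
  set Pd := LinearMap.toMatrix' Plin with hPd
  set Qd := LinearMap.toMatrix' Qlin with hQd
  have hB : B = Pd * Qd := by
    rw [hPd, hQd, ← LinearMap.toMatrix'_comp, hcomp, ← Matrix.toLin'_apply',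
      LinearMap.toMatrix'_toLin']
  have hsum : ∀ (g : Fin d → ℂ),
      ∑ l : Fin r, (if hl : (l : ℕ) < d then g ⟨l, hl⟩ else 0) = ∑ l : Fin d, g l := by
    intro g
    set g' : ℕ → ℂ := fun i => if hl : i < d then g ⟨i, hl⟩ else 0 with hg'
    have h1 : ∑ l : Fin r, (if hl : (l : ℕ) < d then g ⟨l, hl⟩ else 0)
        = ∑ i ∈ Finset.range r, g' i := Fin.sum_univ_eq_sum_range g' r
    have h2 : ∑ l : Fin d, g l = ∑ i ∈ Finset.range d, g' i := by
      have h3 : ∀ l : Fin d, g l = g' (l : ℕ) := by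
        intro l
        simp [hg', l.isLt]
      calc ∑ l : Fin d, g l = ∑ l : Fin d, g' (l : ℕ) := Finset.sum_congr rfl fun l _ => h3 l
        _ = ∑ i ∈ Finset.range d, g' i := Fin.sum_univ_eq_sum_range g' d
    rw [h1, h2]
    refine (Finset.sum_subset (Finset.range_subset_range.mpr hdr) fun i _ hi => ?_).symm
    simp only [Finset.mem_range, not_lt] at hi
    simp [hg', Nat.not_lt.mpr hi]
  refine ⟨Matrix.of fun i (l : Fin r) => if hl : (l : ℕ) < d then Pd i ⟨l, hl⟩ else 0,
          Matrix.of fun (l : Fin r) j => if hl : (l : ℕ) < d then Qd ⟨l, hl⟩ j else 0, ?_⟩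
  ext i j
  rw [hB, Matrix.mul_apply, Matrix.mul_apply]
  have hmul : ∀ l : Fin r,
      (if hl : (l : ℕ) < d then Pd i ⟨l, hl⟩ else 0) *
        (if hl : (l : ℕ) < d then Qd ⟨l, hl⟩ j else 0)
      = (if hl : (l : ℕ) < d then Pd i ⟨l, hl⟩ * Qd ⟨l, hl⟩ j else 0) := by
    intro l; split <;> simp
  simp only [Matrix.of_apply, hmul]
  exact (hsum fun l => Pd i l * Qd l j).symm

end Part2

/-- A tensor admits a t-product factorization with inner tubal dimension `r` iff
every Fourier-domain frontal slice has rank at most `r`. -/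
theorem tprod_factorization_iff_rank {n₁ n₂ r n₃ : ℕ}
    (hn₁ : 1 ≤ n₁) (hn₂ : 1 ≤ n₂) (hr : 1 ≤ r) [NeZero n₃]
    (A : Fin n₁ → Fin n₂ → ZMod n₃ → ℂ) :
    (∃ (X : Fin n₁ → Fin r → ZMod n₃ → ℂ) (Y : Fin r → Fin n₂ → ZMod n₃ → ℂ),
        A = tProd3 X Y) ↔
      ∀ k : ZMod n₃,
        (Matrix.of fun i j => dft3 A i j k : Matrix (Fin n₁) (Fin n₂) ℂ).rank ≤ r := by
  constructor
  · rintro ⟨X, Y, rfl⟩ k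
    have hfac : (Matrix.of fun i j => dft3 (tProd3 X Y) i j k : Matrix (Fin n₁) (Fin n₂) ℂ)
        = (Matrix.of fun i l => dft3 X i l k) * (Matrix.of fun l j => dft3 Y l j k) := by
      ext i j
      rw [Matrix.mul_apply]
      simpa using Part2.dft3_tProd3 X Y i j k
    rw [hfac]
    refine le_trans (Matrix.rank_mul_le_left _ _) ?_
    simpa using Matrix.rank_le_card_width (Matrix.of fun i l => dft3 X i l k)
  · intro h
    choose P Q hPQ using fun k => Part2.exists_factor (Matrix.of fun i j => dft3 A i j k) (h k)
    refine ⟨fun i l m => (n₃ : ℂ)⁻¹ * ∑ k : ZMod n₃, P k i l * TprodAux.E (-(k * m)),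
            fun l j m => (n₃ : ℂ)⁻¹ * ∑ k : ZMod n₃, Q k l j * TprodAux.E (-(k * m)), ?_⟩
    set X : Fin n₁ → Fin r → ZMod n₃ → ℂ :=
      fun i l m => (n₃ : ℂ)⁻¹ * ∑ k : ZMod n₃, P k i l * TprodAux.E (-(k * m)) with hX
    set Y : Fin r → Fin n₂ → ZMod n₃ → ℂ :=
      fun l j m => (n₃ : ℂ)⁻¹ * ∑ k : ZMod n₃, Q k l j * TprodAux.E (-(k * m)) with hY
    have hdX : ∀ (i : Fin n₁) (l : Fin r) (k : ZMod n₃), dft3 X i l k = P k i l := by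
      intro i l k
      rw [Part2.dft3_eq]
      exact Part2.dft_inv (fun k => P k i l) k
    have hdY : ∀ (l : Fin r) (j : Fin n₂) (k : ZMod n₃), dft3 Y l j k = Q k l j := by
      intro l j k
      rw [Part2.dft3_eq]
      exact Part2.dft_inv (fun k => Q k l j) k
    funext i j s
    have hd : ∀ k : ZMod n₃, dft3 (tProd3 X Y) i j k = dft3 A i j k := by
      intro k
      rw [Part2.dft3_tProd3]
      simp only [hdX, hdY]
      rw [← Matrix.mul_apply, ← hPQ k]
      rfl
    calc A i j s
        = (n₃ : ℂ)⁻¹ * ∑ k : ZMod n₃, dft3 A i j k * TprodAux.E (-(k * s)) := by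
          simp only [Part2.dft3_eq]
          exact (Part2.inv_dft (A i j) s).symm
      _ = (n₃ : ℂ)⁻¹ * ∑ k : ZMod n₃, dft3 (tProd3 X Y) i j k * TprodAux.E (-(k * s)) := by
          simp only [hd]
      _ = tProd3 X Y i j s := by
          simp only [Part2.dft3_eq]
          exact Part2.inv_dft (tProd3 X Y i j) s
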